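/- Let u be a continuous weight on (0,∞) such that u(x)/B(x) is non-increasing, where B(t) = ∫₀ᵗ b for a weight b with 0 < B < ∞ on (0,∞), and let f : (0,∞) → [0,∞) be measurable. Then for every t > 0: sup_{t ≤ τ < ∞} (u(τ)/B(τ)) · sup_{0 < y ≤ τ} f(y)B(y) = max{ (u(t)/B(t)) · sup_{0 < y ≤ t} f(y)B(y), sup_{t ≤ y < ∞} f(y)u(y) }. -/

import Mathlib

open MeasureTheory Set Filter
open scoped ENNReal Topology

private lemma aux_mul_essSup_le {α : Type*} {m : MeasurableSpace α} {μ : Measure α}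
    {c : ℝ≥0∞} {g h : α → ℝ≥0∞} (hgh : ∀ᵐ y ∂μ, c * g y ≤ h y) :
    c * essSup g μ ≤ essSup h μ := by
  rw [← ENNReal.essSup_const_mul]
  exact essSup_mono_ae hgh

/-- If `u` is a continuous weight with `u/B` non-increasing (where
`B(t) = ∫₀ᵗ b`, `0 < B < ∞`) and `f ≥ 0` is measurable, then for every `t > 0`:
`ess sup_{t ≤ τ} (u(τ)/B(τ)) · ess sup_{0 < y ≤ τ} f(y)B(y)
  = max{(u(t)/B(t)) ess sup_{0 < y ≤ t} f(y)B(y), ess sup_{t ≤ y} f(y)u(y)}`. -/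
theorem stmt_4 (u b f : ℝ → ℝ≥0∞)
    (hu : Measurable u) (hb : Measurable b) (hf : Measurable f)
    (hucont : ContinuousOn u (Ioi (0 : ℝ)))
    (hB : ∀ t : ℝ, 0 < t →
      0 < (∫⁻ y in Ioc 0 t, b y) ∧ (∫⁻ y in Ioc 0 t, b y) < ⊤)
    (huB : ∀ x y : ℝ, 0 < y → y ≤ x →
      u x / (∫⁻ s in Ioc 0 x, b s) ≤ u y / (∫⁻ s in Ioc 0 y, b s)) :
    ∀ t : ℝ, 0 < t →
      essSup (fun τ => (u τ / (∫⁻ s in Ioc 0 τ, b s))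
            * essSup (fun y => f y * ∫⁻ s in Ioc 0 y, b s)
                (volume.restrict (Ioc 0 τ)))
          (volume.restrict (Ici t))
        = max
            ((u t / (∫⁻ s in Ioc 0 t, b s))
              * essSup (fun y => f y * ∫⁻ s in Ioc 0 y, b s)
                  (volume.restrict (Ioc 0 t)))
            (essSup (fun y => f y * u y) (volume.restrict (Ici t))) := by
  intro t ht
  set B : ℝ → ℝ≥0∞ := fun x => ∫⁻ s in Ioc 0 x, b s with hBdef
  set φ : ℝ → ℝ≥0∞ := fun x => u x / B x with hφdef
  set FB : ℝ → ℝ≥0∞ := fun y => f y * B y with hFBdef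
  set S : ℝ → ℝ≥0∞ := fun x => essSup FB (volume.restrict (Ioc 0 x)) with hSdef
  set G : ℝ → ℝ≥0∞ := fun τ => φ τ * S τ with hGdef
  set L : ℝ≥0∞ := essSup G (volume.restrict (Ici t)) with hLdef
  have hφle : ∀ x y : ℝ, 0 < y → y ≤ x → φ x ≤ φ y := huB
  have hB0 : ∀ x : ℝ, 0 < x → B x ≠ 0 := fun x hx => (hB x hx).1.ne'
  have hBtop : ∀ x : ℝ, B x ≠ ⊤ := by
    intro x
    rcases le_or_gt x 0 with hx | hx
    · have hemp : Ioc (0:ℝ) x = ∅ := Ioc_eq_empty (fun h => absurd (hx.trans_lt h) (lt_irrefl _))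
      simp only [hBdef, hemp, Measure.restrict_empty, lintegral_zero_measure]
      exact ENNReal.zero_ne_top
    · exact (hB x hx).2.ne
  have hBmono : Monotone B := fun x y hxy => lintegral_mono_set (Ioc_subset_Ioc_right hxy)
  have hSmono : Monotone S := fun x y hxy =>
    essSup_mono_measure' (Measure.restrict_mono (Ioc_subset_Ioc_right hxy) le_rfl)
  have huφB : ∀ y : ℝ, 0 < y → φ y * B y = u y := fun y hy =>
    ENNReal.div_mul_cancel (hB0 y hy) (hBtop y)
  -- right continuity of B
  have hBright : ∀ y : ℝ, Tendsto B (𝓝[>] y) (𝓝 (B y)) := by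
    intro y
    have h := hBmono.tendsto_nhdsGT y
    have hBm : ∀ x : ℝ, B x = volume.withDensity b (Ioc 0 x) := fun x =>
      (withDensity_apply b measurableSet_Ioc).symm
    have hseq : Tendsto (fun n : ℕ => B (y + 1 / (n + 1))) atTop (𝓝 (B y)) := by
      have hanti : Antitone (fun n : ℕ => Ioc (0:ℝ) (y + 1 / (n + 1))) := by
        intro n m hnm
        refine Ioc_subset_Ioc_right ?_
        have h1 : ((n:ℝ) + 1) ≤ ((m:ℝ) + 1) := by exact_mod_cast Nat.succ_le_succ hnm
        have h2 : (0:ℝ) < (n:ℝ) + 1 := by positivity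
        have := one_div_le_one_div_of_le h2 h1
        linarith
      have hμ := tendsto_measure_iInter_atTop (μ := volume.withDensity b)
        (s := fun n : ℕ => Ioc (0:ℝ) (y + 1 / (n + 1)))
        (fun n => measurableSet_Ioc.nullMeasurableSet) hanti
        ⟨0, by rw [← hBm]; exact hBtop _⟩
      have hint : (⋂ n : ℕ, Ioc (0:ℝ) (y + 1 / (n + 1))) = Ioc 0 y := by
        ext x
        simp only [mem_iInter, mem_Ioc]
        constructor
        · intro h'
          refine ⟨(h' 0).1, ?_⟩
          by_contra hxy
          push_neg at hxy
          obtain ⟨n, hn⟩ := exists_nat_one_div_lt (sub_pos.2 hxy)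
          have := (h' n).2
          linarith
        · rintro ⟨h1, h2⟩ n
          have h3 : (0:ℝ) < 1 / ((n:ℝ) + 1) := by positivity
          exact ⟨h1, by linarith⟩
      rw [hint] at hμ
      have : (fun n : ℕ => B (y + 1 / (n + 1)))
          = (volume.withDensity b) ∘ (fun n : ℕ => Ioc (0:ℝ) (y + 1 / (n + 1))) := by
        funext n; exact hBm _
      rw [this, ← hBm y] at *
      exact hμ
    have heq : sInf (B '' Ioi y) = B y := by
      apply le_antisymm
      · refine ge_of_tendsto hseq (Eventually.of_forall fun n => sInf_le ?_)
        refine ⟨y + 1 / (n + 1), ?_, rfl⟩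
        have h3 : (0:ℝ) < 1 / ((n:ℝ) + 1) := by positivity
        exact mem_Ioi.2 (by linarith)
      · refine le_sInf ?_
        rintro z ⟨x, hx, rfl⟩
        exact hBmono (le_of_lt hx)
    rwa [heq] at h
  -- right continuity of φ
  have hφright : ∀ y : ℝ, 0 < y → Tendsto φ (𝓝[>] y) (𝓝 (φ y)) := by
    intro y hy
    have hu' : Tendsto u (𝓝[>] y) (𝓝 (u y)) :=
      (hucont y hy).mono_left (nhdsWithin_mono y (Ioi_subset_Ioi hy.le))
    exact ENNReal.Tendsto.div hu' (Or.inr (hB0 y hy)) (hBright y) (Or.inl (hBtop y))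
  -- KEY CLAIM : G τ₀ ≤ L for every τ₀ ≥ t
  have hclaim : ∀ τ₀ : ℝ, t ≤ τ₀ → G τ₀ ≤ L := by
    intro τ₀ hτ₀
    refine le_of_forall_lt fun c hc => ?_
    have hctop : c ≠ ⊤ := ne_top_of_lt hc
    have hτ0pos : (0:ℝ) < τ₀ := lt_of_lt_of_le ht hτ₀
    have hnb : ∀ᶠ x in 𝓝 (φ τ₀), c < x * S τ₀ := by
      by_cases hStop : S τ₀ = ⊤
      · have hφ0 : φ τ₀ ≠ 0 := by
          intro h0
          have : G τ₀ = 0 := by simp only [hGdef, h0, zero_mul]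
          rw [this] at hc
          exact absurd hc (not_lt.2 zero_le)
        filter_upwards [eventually_gt_nhds (pos_iff_ne_zero.mpr hφ0)] with x hx
        rw [hStop, ENNReal.mul_top hx.ne']
        exact hctop.lt_top
      · exact (ENNReal.Tendsto.mul_const tendsto_id (Or.inr hStop)).eventually
          (eventually_gt_nhds hc)
    have hev : ∀ᶠ τ in 𝓝[>] τ₀, c < φ τ * S τ₀ := (hφright τ₀ hτ0pos).eventually hnb
    obtain ⟨δ, hδ, hIoo⟩ := (nhdsGT_basis τ₀).eventually_iff.1 hev
    have hApos : 0 < volume.restrict (Ici t) (Ioo τ₀ δ) := by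
      have hss : Ioo τ₀ δ ⊆ Ici t := fun x hx => hτ₀.trans (le_of_lt hx.1)
      rw [Measure.restrict_apply measurableSet_Ioo, inter_eq_self_of_subset_left hss,
        Real.volume_Ioo]
      exact ENNReal.ofReal_pos.2 (by linarith)
    have hae : ∀ᵐ τ ∂volume.restrict (Ici t), G τ ≤ L := ENNReal.ae_le_essSup G
    have hwit : ∃ τ, τ ∈ Ioo τ₀ δ ∧ G τ ≤ L := by
      by_contra hno
      push_neg at hno
      have hsub : Ioo τ₀ δ ⊆ {τ | ¬ G τ ≤ L} := fun τ hτ => not_le.2 (hno τ hτ)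
      rw [ae_iff] at hae
      exact absurd (le_antisymm ((measure_mono hsub).trans hae.le) zero_le) hApos.ne'
    obtain ⟨τ, hτmem, hτL⟩ := hwit
    calc c < φ τ * S τ₀ := hIoo hτmem
      _ ≤ φ τ * S τ := mul_le_mul_right (hSmono hτmem.1.le) _
      _ ≤ L := hτL
  show L = max (φ t * S t) (essSup (fun y => f y * u y) (volume.restrict (Ici t)))
  apply le_antisymm
  · -- L ≤ max ...
    rw [hLdef]
    refine essSup_le_of_ae_le _ ?_
    filter_upwards [ae_restrict_mem measurableSet_Ici] with τ hτmem
    have hτt : t ≤ τ := hτmem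
    have hsplit : S τ ≤ max (S t) (essSup FB (volume.restrict (Ioc t τ))) := by
      have hU : Ioc (0:ℝ) τ = Ioc 0 t ∪ Ioc t τ := (Ioc_union_Ioc_eq_Ioc ht.le hτt).symm
      show essSup FB (volume.restrict (Ioc 0 τ)) ≤ _
      rw [hU]
      refine essSup_le_of_ae_le _ ((ae_restrict_union_iff _ _ _).2 ⟨?_, ?_⟩)
      · filter_upwards [ENNReal.ae_le_essSup (μ := volume.restrict (Ioc 0 t)) FB] with z hz
        exact hz.trans (le_max_left _ _)
      · filter_upwards [ENNReal.ae_le_essSup (μ := volume.restrict (Ioc t τ)) FB] with z hz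
        exact hz.trans (le_max_right _ _)
    have h1 : φ τ * S t ≤ φ t * S t := mul_le_mul_left (hφle τ t ht hτt) _
    have h2 : φ τ * essSup FB (volume.restrict (Ioc t τ))
        ≤ essSup (fun y => f y * u y) (volume.restrict (Ici t)) := by
      have hb2 : ∀ᵐ y ∂volume.restrict (Ioc t τ), φ τ * FB y ≤ f y * u y := by
        filter_upwards [ae_restrict_mem measurableSet_Ioc] with y hy
        have hy0 : (0:ℝ) < y := ht.trans hy.1
        calc φ τ * FB y ≤ φ y * FB y := mul_le_mul_left (hφle τ y hy0 hy.2) _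
          _ = f y * (φ y * B y) := by simp only [hFBdef]; ring
          _ = f y * u y := by rw [huφB y hy0]
      refine (aux_mul_essSup_le hb2).trans ?_
      exact essSup_mono_measure' (Measure.restrict_mono
        (fun y hy => le_of_lt hy.1 : Ioc t τ ⊆ Ici t) le_rfl)
    calc G τ = φ τ * S τ := rfl
      _ ≤ φ τ * max (S t) (essSup FB (volume.restrict (Ioc t τ))) :=
          mul_le_mul_right hsplit _
      _ ≤ max (φ τ * S t) (φ τ * essSup FB (volume.restrict (Ioc t τ))) := by
          rcases le_total (S t) (essSup FB (volume.restrict (Ioc t τ))) with h | h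
          · rw [max_eq_right h]; exact le_max_right _ _
          · rw [max_eq_left h]; exact le_max_left _ _
      _ ≤ max (φ t * S t) (essSup (fun y => f y * u y) (volume.restrict (Ici t))) :=
          max_le_max h1 h2
  · -- max ... ≤ L
    refine max_le ?_ ?_
    · exact hclaim t le_rfl
    · refine essSup_le_of_ae_le _ ?_
      have hqae : ∀ᵐ y ∂(volume : Measure ℝ), ∀ q : ℚ, y ∈ Ioc (0:ℝ) (q:ℝ) → FB y ≤ S (q:ℝ) := by
        rw [ae_all_iff]
        intro q
        exact (ae_restrict_iff' measurableSet_Ioc).1 (ENNReal.ae_le_essSup FB)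
      filter_upwards [ae_restrict_of_ae hqae, ae_restrict_mem measurableSet_Ici] with y hy hymem
      have hyt : t ≤ y := hymem
      have hy0 : (0:ℝ) < y := lt_of_lt_of_le ht hyt
      have hex : ∀ n : ℕ, ∃ q : ℚ, y < (q:ℝ) ∧ (q:ℝ) < y + 1 / (n + 1) := by
        intro n
        have h1 : (0:ℝ) < 1 / ((n:ℝ) + 1) := by positivity
        exact exists_rat_btwn (by linarith)
      choose q hq1 hq2 using hex
      have hqtend : Tendsto (fun n : ℕ => ((q n : ℝ))) atTop (𝓝[>] y) := by
        rw [tendsto_nhdsWithin_iff]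
        constructor
        · have hupper : Tendsto (fun n : ℕ => y + 1 / ((n:ℝ) + 1)) atTop (𝓝 y) := by
            have h0 := tendsto_one_div_add_atTop_nhds_zero_nat (𝕜 := ℝ)
            have h1 : Tendsto (fun _ : ℕ => y) atTop (𝓝 y) := tendsto_const_nhds
            simpa using h1.add h0
          exact tendsto_of_tendsto_of_tendsto_of_le_of_le tendsto_const_nhds hupper
            (fun n => (hq1 n).le) (fun n => (hq2 n).le)
        · exact Eventually.of_forall fun n => hq1 n
      have hφtend : Tendsto (fun n : ℕ => φ ((q n : ℝ))) atTop (𝓝 (φ y)) :=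
        (hφright y hy0).comp hqtend
      have hbound : ∀ n : ℕ, φ ((q n : ℝ)) * FB y ≤ L := by
        intro n
        have h1 : FB y ≤ S ((q n : ℝ)) := hy (q n) ⟨hy0, (hq1 n).le⟩
        calc φ ((q n : ℝ)) * FB y ≤ φ ((q n : ℝ)) * S ((q n : ℝ)) := mul_le_mul_right h1 _
          _ ≤ L := hclaim _ (hyt.trans (hq1 n).le)
      show f y * u y ≤ L
      have hrw : f y * u y = φ y * FB y := by
        have h3 : φ y * FB y = f y * (φ y * B y) := by simp only [hFBdef]; ring
        rw [h3, huφB y hy0]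
      rw [hrw]
      by_cases hFBtop : FB y = ⊤
      · by_cases hφ0 : φ y = 0
        · simp [hφ0]
        · obtain ⟨n, hn⟩ :=
            (hφtend.eventually (eventually_gt_nhds (pos_iff_ne_zero.2 hφ0))).exists
          have h4 := hbound n
          rw [hFBtop, ENNReal.mul_top hn.ne'] at h4
          exact le_trans le_top h4
      · exact le_of_tendsto (ENNReal.Tendsto.mul_const hφtend (Or.inr hFBtop))
          (Eventually.of_forall hbound)
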